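/- Let V be a type, A an oriented graph on V, and u ≠ v two non-adjacent vertices. Then u and v are joined by a directed 2-path in push S A for every set S ⊆ V if and only if there exists a vertex w on which u and v agree and a vertex w' on which u and v disagree. -/

import Mathlib

/-- A directed graph `A` on `V` is an oriented graph: irreflexive and asymmetric. -/
def IsOriented {V : Type*} (A : V → V → Prop) : Prop :=
  (∀ v, ¬ A v v) ∧ ∀ u v, A u v → ¬ A v u

/-- `u` and `v` are adjacent in `A`. -/
def Adj {V : Type*} (A : V → V → Prop) (u v : V) : Prop :=
  A u v ∨ A v u

/-- The push of `A` by the vertex set `S`: arcs with exactly one endpoint in `S`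
are reversed. -/
def push {V : Type*} (S : Set V) (A : V → V → Prop) (u v : V) : Prop :=
  (Xor' (u ∈ S) (v ∈ S) ∧ A v u) ∨ (¬ Xor' (u ∈ S) (v ∈ S) ∧ A u v)

/-- `u` and `v` agree on `w`. -/
def AgreeOn {V : Type*} (A : V → V → Prop) (u v w : V) : Prop :=
  (A w u ∧ A w v) ∨ (A u w ∧ A v w)

/-- `u` and `v` disagree on `w`. -/
def DisagreeOn {V : Type*} (A : V → V → Prop) (u v w : V) : Prop :=
  (A u w ∧ A w v) ∨ (A w u ∧ A v w)

/-- `u` and `v` are joined by a directed 2-path in `A`. -/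
def TwoPath {V : Type*} (A : V → V → Prop) (u v : V) : Prop :=
  ∃ w, (A u w ∧ A w v) ∨ (A v w ∧ A w u)

/-- `A` is an oriented clique: any two distinct vertices are adjacent or joined
by a directed 2-path. -/
def IsOrientedClique {V : Type*} (A : V → V → Prop) : Prop :=
  ∀ u v, u ≠ v → Adj A u v ∨ TwoPath A u v

/-- `A` is a push clique: every push of `A` is an oriented clique. -/
def IsPushClique {V : Type*} (A : V → V → Prop) : Prop :=
  ∀ S : Set V, IsOrientedClique (push S A)

/-- `A` is an orientation of the simple graph `G`. -/
def IsOrientationOf {V : Type*} (A : V → V → Prop) (G : SimpleGraph V) : Prop :=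
  IsOriented A ∧ ∀ u v, Adj A u v ↔ G.Adj u v

/-- `G` is an underlying push clique. -/
def IsUnderlyingPushClique {V : Type*} (G : SimpleGraph V) : Prop :=
  ∃ A : V → V → Prop, IsOrientationOf A G ∧ IsPushClique A

/-- `G` is an underlying oriented clique. -/
def IsUnderlyingOrientedClique {V : Type*} (G : SimpleGraph V) : Prop :=
  ∃ A : V → V → Prop, IsOrientationOf A G ∧ IsOrientedClique A

theorem stmt_1 {V : Type*} (A : V → V → Prop) (hA : IsOriented A)
    (u v : V) (huv : u ≠ v) (hnadj : ¬ Adj A u v) :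
    (∀ S : Set V, TwoPath (push S A) u v) ↔
      ((∃ w, AgreeOn A u v w) ∧ (∃ w', DisagreeOn A u v w')) := by
  obtain ⟨hirr, hasym⟩ := hA
  constructor
  · intro h
    constructor
    · obtain ⟨w, hw⟩ := h {u}
      refine ⟨w, ?_⟩
      by_cases h1 : w = u
      · subst h1; simp [push, Xor', hirr] at hw
      · by_cases h2 : w = v
        · subst h2; simp [push, Xor', hirr] at hw
        · simp [push, Xor', h1, h2, Ne.symm h1, Ne.symm h2, huv, Ne.symm huv] at hw
          unfold AgreeOn
          tauto
    · obtain ⟨w, hw⟩ := h ∅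
      refine ⟨w, ?_⟩
      simp [push, Xor'] at hw
      unfold DisagreeOn
      tauto
  · rintro ⟨⟨w, hw⟩, ⟨w', hw'⟩⟩ S
    unfold AgreeOn at hw
    unfold DisagreeOn at hw'
    by_cases hu : u ∈ S <;> by_cases hv : v ∈ S
    · refine ⟨w', ?_⟩
      by_cases hws : w' ∈ S <;> simp [push, Xor', hu, hv, hws] <;> tauto
    · refine ⟨w, ?_⟩
      by_cases hws : w ∈ S <;> simp [push, Xor', hu, hv, hws] <;> tauto
    · refine ⟨w, ?_⟩
      by_cases hws : w ∈ S <;> simp [push, Xor', hu, hv, hws] <;> tauto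
    · refine ⟨w', ?_⟩
      by_cases hws : w' ∈ S <;> simp [push, Xor', hu, hv, hws] <;> tauto
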